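/- Let p ∈ ℕ and let (a_k)_{k≥0} be a real sequence with a_k → 0 as k → ∞ and Δ^{p+1} a_k ≥ 0 for all k ≥ 0. Then for every n ≥ 0, the series Σ_{k=0}^∞ A_k^p · Δ^{p+1} a_{n+k} converges and equals a_n. -/

import Mathlib

open Filter Topology

noncomputable section

/-- Forward difference operator on sequences: `(Δa)_k = a_k - a_{k+1}`. -/
def fdiff (a : ℕ → ℝ) : ℕ → ℝ := fun k => a k - a (k + 1)

private lemma hockey (p j : ℕ) :
    (∑ k ∈ Finset.range (j + 1), Nat.choose (k + p) k) = Nat.choose (j + p + 1) j := by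
  induction j with
  | zero => simp
  | succ j ih =>
    rw [Finset.sum_range_succ, ih]
    have h1 : j + 1 + p = j + p + 1 := by omega
    rw [h1, Nat.choose_succ_succ (j + p + 1) j]

private lemma tele (a : ℕ → ℝ) (ha_lim : Tendsto a atTop (𝓝 0))
    (hpos : ∀ k, 0 ≤ fdiff a k) (n : ℕ) :
    HasSum (fun k => fdiff a (n + k)) (a n) := by
  rw [hasSum_iff_tendsto_nat_of_nonneg (fun k => hpos (n + k))]
  have key : ∀ N, ∑ k ∈ Finset.range N, fdiff a (n + k) = a n - a (n + N) := by
    intro N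
    simpa only [fdiff, add_assoc, add_zero] using Finset.sum_range_sub' (fun k => a (n + k)) N
  simp only [key]
  have hmono : Tendsto (fun N => n + N) atTop atTop := by
    simpa [add_comm] using tendsto_add_atTop_nat n
  have h2 : Tendsto (fun N => a (n + N)) atTop (𝓝 0) := ha_lim.comp hmono
  simpa using (tendsto_const_nhds (x := a n)).sub h2

/-- **Tail-sum identity.** If `a_k → 0` and `Δ^{p+1} a_k ≥ 0` for all `k`, then
`Σ_{k≥0} A_k^p Δ^{p+1} a_{n+k} = a_n` for every `n`, where `A_k^p = C(k+p, k)`. -/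
theorem tailSum_fdiff (p : ℕ) (a : ℕ → ℝ)
    (ha_lim : Tendsto a atTop (𝓝 0))
    (ha_pos : ∀ k, 0 ≤ fdiff^[p + 1] a k) (n : ℕ) :
    HasSum (fun k : ℕ => (Nat.choose (k + p) k : ℝ) * fdiff^[p + 1] a (n + k)) (a n) := by
  induction p generalizing a n with
  | zero =>
    simpa [Function.iterate_one] using tele a ha_lim (by simpa using ha_pos) n
  | succ p ih =>
    have hiter : fdiff^[p + 1 + 1] a = fdiff^[p + 1] (fdiff a) :=
      Function.iterate_succ_apply fdiff (p + 1) a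
    have hfd_lim : Tendsto (fdiff a) atTop (𝓝 0) := by
      have := ha_lim.sub (ha_lim.comp (tendsto_add_atTop_nat 1))
      rw [sub_zero] at this; exact this
    have hfd_pos : ∀ k, 0 ≤ fdiff^[p + 1] (fdiff a) k := by
      intro k; rw [← hiter]; exact ha_pos k
    have rows : ∀ m, HasSum (fun k => (Nat.choose (k + p) k : ℝ) *
        fdiff^[p + 1 + 1] a (m + k)) (fdiff a m) := by
      intro m
      have := ih (fdiff a) hfd_lim hfd_pos m
      simpa [← hiter] using this
    have hb : ∀ k, 0 ≤ fdiff^[p + 1 + 1] a k := ha_pos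
    have hfdpos : ∀ m, 0 ≤ fdiff a m := fun m =>
      hasSum_le (fun k => mul_nonneg (by positivity) (hb (m + k))) hasSum_zero (rows m)
    have htel : HasSum (fun i => fdiff a (n + i)) (a n) := tele a ha_lim hfdpos n
    set f : ℕ × ℕ → ℝ := fun q =>
      (Nat.choose (q.2 + p) q.2 : ℝ) * fdiff^[p + 1 + 1] a (n + q.1 + q.2) with hf_def
    have hfnn : 0 ≤ f := fun q => mul_nonneg (by positivity) (hb _)
    have hrows' : ∀ i, HasSum (fun k => f (i, k)) (fdiff a (n + i)) := by
      intro i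
      exact rows (n + i)
    have hsf : Summable f := by
      rw [summable_prod_of_nonneg hfnn]
      refine ⟨fun i => (hrows' i).summable, ?_⟩
      have heq : (fun i => ∑' k, f (i, k)) = fun i => fdiff a (n + i) := by
        funext i; exact (hrows' i).tsum_eq
      rw [heq]; exact htel.summable
    have hftot : HasSum f (a n) := by
      have h1 := hsf.hasSum
      have h2 : HasSum (fun i => fdiff a (n + i)) (∑' q, f q) :=
        h1.prod_fiberwise hrows'
      rwa [h2.unique htel] at h1
    have hsig : HasSum (f ∘ Finset.HasAntidiagonal.sigmaAntidiagonalEquivProd) (a n) :=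
      (Finset.HasAntidiagonal.sigmaAntidiagonalEquivProd.hasSum_iff).2 hftot
    have hfib : ∀ j : ℕ, HasSum
        (fun c : (Finset.HasAntidiagonal.antidiagonal j : Finset (ℕ × ℕ)) =>
          (f ∘ Finset.HasAntidiagonal.sigmaAntidiagonalEquivProd) ⟨j, c⟩)
        ((Nat.choose (j + (p + 1)) j : ℝ) * fdiff^[p + 1 + 1] a (n + j)) := by
      intro j
      have hrfl : (fun c : (Finset.HasAntidiagonal.antidiagonal j : Finset (ℕ × ℕ)) =>
          (f ∘ Finset.HasAntidiagonal.sigmaAntidiagonalEquivProd) ⟨j, c⟩) =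
          fun c : (Finset.HasAntidiagonal.antidiagonal j : Finset (ℕ × ℕ)) => f ↑c := rfl
      rw [hrfl]
      have hfin := hasSum_fintype
        (fun c : (Finset.HasAntidiagonal.antidiagonal j : Finset (ℕ × ℕ)) => f ↑c)
      convert hfin using 1
      rw [Finset.sum_coe_sort (Finset.HasAntidiagonal.antidiagonal j) f]
      have step1 : ∑ q ∈ Finset.HasAntidiagonal.antidiagonal j, f q =
          ∑ q ∈ Finset.HasAntidiagonal.antidiagonal j,
            (Nat.choose (q.2 + p) q.2 : ℝ) * fdiff^[p + 1 + 1] a (n + j) := by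
        refine Finset.sum_congr rfl fun q hq => ?_
        rw [Finset.HasAntidiagonal.mem_antidiagonal] at hq
        simp only [hf_def]
        rw [show n + q.1 + q.2 = n + j by omega]
      rw [step1, ← Finset.sum_mul]
      congr 1
      have hswap : ∑ q ∈ Finset.HasAntidiagonal.antidiagonal j, (Nat.choose (q.2 + p) q.2 : ℝ) =
          ∑ q ∈ Finset.HasAntidiagonal.antidiagonal j, (Nat.choose (q.1 + p) q.1 : ℝ) := by
        simpa using Finset.Nat.sum_antidiagonal_swap (n := j)
          (f := fun q => (Nat.choose (q.1 + p) q.1 : ℝ))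
      rw [hswap, Finset.Nat.sum_antidiagonal_eq_sum_range_succ_mk
        (fun q => (Nat.choose (q.1 + p) q.1 : ℝ))]
      norm_cast
      exact (hockey p j).symm
    exact hsig.sigma hfib
end
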